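/- In the poset P³, any two conditions p, q with the same stem ⟨δ₀, P₁, …, Pₙ, δₙ⟩ whose constraint parts satisfy: dom(h_p) ∩ dom(h_q) ∈ E, and for every β in this intersection h_p(β) and h_q(β) are compatible in P(δₙ, β), and for every pair (α, β) the values H_p(α,β), H_q(α,β) are compatible in P(α,β), are compatible in P³. -/
import Mathlib


open Cardinal Ordinal

/-- Partial functions on pairs of ordinals (conditions of Lévy collapses `Col(γ, <δ)`). -/
abbrev Col2 := Ordinal.{0} × Ordinal.{0} → Option Ordinal.{0}

/-- Partial functions on ordinals (conditions of collapses `Col(γ, δ)`). -/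
abbrev Col1 := Ordinal.{0} → Option Ordinal.{0}

/-- `p` is a condition of `Col(γ, <δ)`: a partial function on `γ × δ` with
`p (ξ, ζ) < ζ` and domain of size `< card γ`. -/
def memColLt (γ δ : Ordinal.{0}) (p : Col2) : Prop :=
  (∀ ξ ζ v, p (ξ, ζ) = some v → ξ < γ ∧ ζ < δ ∧ v < ζ) ∧
    #{x | p x ≠ none} < Cardinal.lift.{1,0} γ.card

/-- `p` is a condition of `Col(γ, δ)`: a partial function from `γ` to `δ` with
domain of size `< card γ`. -/
def memCol (γ δ : Ordinal.{0}) (p : Col1) : Prop :=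
  (∀ ξ v, p ξ = some v → ξ < γ ∧ v < δ) ∧
    #{x | p x ≠ none} < Cardinal.lift.{1,0} γ.card

/-- The extension (reverse inclusion) order on partial functions. -/
def col2Le (p q : Col2) : Prop := ∀ x v, q x = some v → p x = some v

def col1Le (p q : Col1) : Prop := ∀ x v, q x = some v → p x = some v

/-- The ordinal of the third cardinal successor `α⁺⁺⁺`. -/
noncomputable def succ3 (α : Ordinal.{0}) : Ordinal :=
  (Order.succ (Order.succ (Order.succ α.card))).ord

/-- A condition of the product `P(α, β) = Col(α⁺⁺⁺, <β) × Col(β, β⁺)`. -/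
abbrev PairCond := Col2 × Col1

def memP (α β : Ordinal.{0}) (c : PairCond) : Prop :=
  memColLt (succ3 α) β c.1 ∧ memCol β (Order.succ β.card).ord c.2

/-- The coordinatewise order on `P(α, β)`. -/
def pairLe (c d : PairCond) : Prop := col2Le c.1 d.1 ∧ col1Le c.2 d.2

/-- A condition `⟨δ₀, P₁, δ₁, …, Pₙ, δₙ, H, h⟩` of the Prikry-type forcing `P³`
(Definition 2.1), relative to a cardinal (ordinal) `κ` and a family `E` of
measure-one subsets of `κ`. -/
structure P3Cond (κ : Ordinal.{0}) (E : Set (Set Ordinal.{0})) where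
  n : ℕ
  δ : Fin (n + 1) → Ordinal.{0}
  P : Fin n → PairCond
  H : Ordinal.{0} × Ordinal.{0} → PairCond
  h : Ordinal.{0} → PairCond
  dom : Set Ordinal.{0}
  δ_mono : StrictMono δ
  δ_lt : δ (Fin.last n) < κ
  P_mem : ∀ k : Fin n, memP (δ k.castSucc) (δ k.succ) (P k)
  dom_mem : dom ∈ E
  dom_sub : ∀ β ∈ dom, δ (Fin.last n) < β ∧ β < κ
  h_mem : ∀ β ∈ dom, memP (δ (Fin.last n)) β (h β)
  H_mem : ∀ α ∈ dom, ∀ β ∈ dom, α < β → memP α β (H (α, β))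

/-- The ordering of `P³` (Definition 2.2): `p ≤ q` iff the stem of `p` end-extends that
of `q` with coordinatewise stronger collapse parts, new Prikry points come from `dom(h_q)`
with collapse parts below the prescribed values of `q`'s `h`- and `H`-parts,
`dom(h_p) ⊆ dom(h_q)`, and the `H`- (and, when no point is added, `h`-) parts of `p`
are pointwise stronger than those of `q`. -/
def P3Le {κ : Ordinal.{0}} {E : Set (Set Ordinal.{0})} (p q : P3Cond κ E) : Prop :=
  ∃ hn : q.n ≤ p.n,
    (∀ k : Fin (q.n + 1), p.δ (Fin.castLE (Nat.succ_le_succ hn) k) = q.δ k) ∧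
    (∀ k : Fin q.n, pairLe (p.P (Fin.castLE hn k)) (q.P k)) ∧
    (∀ k : Fin (p.n + 1), q.n < (k : ℕ) → p.δ k ∈ q.dom) ∧
    p.dom ⊆ q.dom ∧
    (∀ α ∈ p.dom, ∀ β ∈ p.dom, α < β → pairLe (p.H (α, β)) (q.H (α, β))) ∧
    (p.n = q.n → ∀ β ∈ p.dom, pairLe (p.h β) (q.h β)) ∧
    (∀ hlt : q.n < p.n,
      pairLe (p.P ⟨q.n, hlt⟩) (q.h (p.δ ⟨q.n + 1, by omega⟩)) ∧
      (∀ k : Fin p.n, q.n + 1 ≤ (k : ℕ) →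
        pairLe (p.P k) (q.H (p.δ k.castSucc, p.δ k.succ))) ∧
      (∀ β ∈ p.dom, pairLe (p.h β) (q.H (p.δ (Fin.last p.n), β))))

/-- Two conditions of `P³` with the same stem whose constraint parts are pointwise
compatible (and whose `h`-domains have measure-one intersection) are compatible in `P³`. -/
theorem stmt14 (κ : Ordinal.{0}) (E : Set (Set Ordinal.{0}))
    (hE : ∀ X ∈ E, ∀ Y ∈ E, X ∩ Y ∈ E)
    (p q : P3Cond κ E)
    (hn : p.n = q.n)
    (hδ : ∀ k : Fin (p.n + 1), p.δ k = q.δ (Fin.cast (by omega) k))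
    (hP : ∀ k : Fin p.n, p.P k = q.P (Fin.cast (by omega) k))
    (hdom : p.dom ∩ q.dom ∈ E)
    (hh : ∀ β ∈ p.dom ∩ q.dom, ∃ c : PairCond,
      memP (p.δ (Fin.last p.n)) β c ∧ pairLe c (p.h β) ∧ pairLe c (q.h β))
    (hH : ∀ α β : Ordinal.{0}, α < β → ∃ c : PairCond,
      memP α β c ∧ pairLe c (p.H (α, β)) ∧ pairLe c (q.H (α, β))) :
    ∃ r : P3Cond κ E, P3Le r p ∧ P3Le r q := by
  classical
  have pairLe_refl : ∀ c : PairCond, pairLe c c := fun c =>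
    ⟨fun x v hv => hv, fun x v hv => hv⟩
  refine ⟨{ n := p.n, δ := p.δ, P := p.P,
            H := fun x => if h : x.1 < x.2 then (hH x.1 x.2 h).choose else p.H x,
            h := fun β => if h : β ∈ p.dom ∩ q.dom then (hh β h).choose else p.h β,
            dom := p.dom ∩ q.dom,
            δ_mono := p.δ_mono, δ_lt := p.δ_lt, P_mem := p.P_mem,
            dom_mem := hdom,
            dom_sub := fun β hβ => p.dom_sub β hβ.1,
            h_mem := fun β hβ => by
              simp only [dif_pos hβ]; exact (hh β hβ).choose_spec.1,
            H_mem := fun α _ β _ hαβ => by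
              simp only [dif_pos hαβ]; exact (hH α β hαβ).choose_spec.1 },
          ?_, ?_⟩
  · refine ⟨le_rfl, fun k => rfl, fun k => pairLe_refl _, fun k hk => absurd (show (k:ℕ) < p.n + 1 from k.isLt) (by omega),
      Set.inter_subset_left, fun α hα β hβ hαβ => ?_, fun _ β hβ => ?_,
      fun hlt => absurd hlt (lt_irrefl _)⟩
    · simp only [dif_pos hαβ]; exact (hH α β hαβ).choose_spec.2.1
    · simp only [dif_pos hβ]; exact (hh β hβ).choose_spec.2.1
  · refine ⟨hn.ge, fun k => ?_, fun k => ?_,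
      fun k hk => absurd (show (k:ℕ) < p.n + 1 from k.isLt) (by omega),
      Set.inter_subset_right, fun α hα β hβ hαβ => ?_, fun _ β hβ => ?_,
      fun hlt => absurd (show q.n < p.n from hlt) (by omega)⟩
    · exact hδ (Fin.castLE (Nat.succ_le_succ hn.ge) k)
    · show pairLe (p.P (Fin.castLE hn.ge k)) (q.P k)
      rw [hP]; exact pairLe_refl _
    · simp only [dif_pos hαβ]; exact (hH α β hαβ).choose_spec.2.2
    · simp only [dif_pos hβ]; exact (hh β hβ).choose_spec.2.2
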